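/- Let h be a Schwartz function on ℝ and for τ = x+iy with y > 0, φ ∈ [0,2π), ξ = (ξ₁,ξ₂) ∈ ℝ², define Θ_h(τ,φ;ξ) = y^{1/4} ∑_{n∈ℤ} h_φ((n−ξ₂)·y^{1/2})·e((1/2)(n−ξ₂)²x + nξ₁), where h_φ is the metaplectic rotation of h (in particular h_{π/2} = ĥ, the Fourier transform). Then ∫_{[0,1]²} |Θ_h(τ,φ;ξ)|² dξ = ‖h‖₂², the squared L² norm of h. -/

import Mathlib

open MeasureTheory

lemma schwartz_bound (h : SchwartzMap ℝ ℂ) :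
    ∃ C : ℝ, 0 ≤ C ∧ ∀ w : ℝ, ‖h w‖ ≤ C / (1 + w ^ 2) := by
  obtain ⟨C₀, -, hC₀⟩ := h.decay 0 0
  obtain ⟨C₂, -, hC₂⟩ := h.decay 2 0
  have key : ∀ w : ℝ, (1 + w ^ 2) * ‖h w‖ ≤ C₀ + C₂ := by
    intro w
    have h0 := hC₀ w
    have h2 := hC₂ w
    simp only [pow_zero, one_mul, norm_iteratedFDeriv_zero, Real.norm_eq_abs, sq_abs] at h0 h2
    nlinarith [norm_nonneg (h w)]
  refine ⟨C₀ + C₂, ?_, fun w => ?_⟩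
  · have := key 0; nlinarith [norm_nonneg (h 0)]
  · have hw : (0:ℝ) < 1 + w ^ 2 := by positivity
    rw [le_div_iff₀ hw]
    linarith [key w]

lemma summable_base {c : ℝ} (hc : 0 < c) :
    Summable (fun n : ℤ => 1 / (1 + c * max (|(n : ℝ)| - 1) 0 ^ 2)) := by
  have h1 : Summable (fun n : ℕ => 1 / (1 + (n:ℝ) ^ 2)) := by
    rw [← summable_nat_add_iff 1]
    refine Summable.of_nonneg_of_le (fun n => by positivity) (fun n => ?_)
      ((summable_nat_add_iff 1).2 (Real.summable_one_div_nat_pow.2 one_lt_two))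
    apply one_div_le_one_div_of_le (by positivity)
    push_cast; nlinarith [sq_nonneg ((n:ℝ)+1)]
  have hnat : Summable (fun n : ℕ => 1 / (1 + c * max ((n : ℝ) - 1) 0 ^ 2)) := by
    rw [← summable_nat_add_iff 1]
    refine Summable.of_nonneg_of_le (fun n => by positivity) (fun n => ?_)
      (h1.mul_left (1 + 1/c))
    have hmax : max ((((n:ℕ)+1 : ℕ):ℝ) - 1) 0 = (n:ℝ) := by
      push_cast
      rw [show ((n:ℝ)+1-1) = (n:ℝ) by ring, max_eq_left (Nat.cast_nonneg n)]
    rw [hmax, mul_one_div, div_le_div_iff₀ (by positivity) (by positivity)]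
    have hinv : c * (1/c) = 1 := mul_one_div_cancel hc.ne'
    nlinarith [sq_nonneg (n:ℝ), hc.le, (one_div_pos.2 hc).le, hinv]
  apply Summable.of_nat_of_neg
  · refine hnat.congr fun n => ?_
    simp [abs_of_nonneg (show (0:ℝ) ≤ (n:ℕ) by positivity)]
  · refine hnat.congr fun n => ?_
    push_cast
    simp [abs_neg, abs_of_nonneg (show (0:ℝ) ≤ (n:ℕ) by positivity)]

lemma norm_le_aux (h : SchwartzMap ℝ ℂ) {C : ℝ} (hC0 : 0 ≤ C)
    (hC : ∀ w : ℝ, ‖h w‖ ≤ C / (1 + w ^ 2)) {y : ℝ} (hy : 0 < y)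
    (n : ℤ) {t : ℝ} (ht : |t| ≤ 1) :
    ‖h (((n : ℝ) + t) * Real.sqrt y)‖ ≤
      C / (1 + y * max (|(n : ℝ)| - 1) 0 ^ 2) := by
  set m : ℝ := max (|(n : ℝ)| - 1) 0 with hm
  have hm0 : 0 ≤ m := le_max_right _ _
  have hmle : m ≤ |(n : ℝ) + t| := by
    apply max_le _ (abs_nonneg _)
    have : |(n:ℝ)| ≤ |(n:ℝ) + t| + |t| := by
      calc |(n:ℝ)| = |((n:ℝ) + t) + (-t)| := by ring_nf
        _ ≤ |(n:ℝ) + t| + |(-t)| := abs_add_le _ _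
        _ = |(n:ℝ) + t| + |t| := by rw [abs_neg]
    linarith
  have hsq : y * m ^ 2 ≤ (((n : ℝ) + t) * Real.sqrt y) ^ 2 := by
    have h1 : m ^ 2 ≤ ((n:ℝ) + t) ^ 2 := by
      rw [← sq_abs ((n:ℝ) + t)]
      exact pow_le_pow_left₀ hm0 hmle 2
    have h2 : (((n : ℝ) + t) * Real.sqrt y) ^ 2 = ((n:ℝ) + t) ^ 2 * y := by
      rw [mul_pow, Real.sq_sqrt hy.le]
    nlinarith [hy.le]
  calc ‖h (((n : ℝ) + t) * Real.sqrt y)‖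
      ≤ C / (1 + (((n : ℝ) + t) * Real.sqrt y) ^ 2) := hC _
    _ ≤ C / (1 + y * m ^ 2) := by
        apply div_le_div_of_nonneg_left hC0 (by positivity)
        linarith

lemma summable_norm_h (h : SchwartzMap ℝ ℂ) {y : ℝ} (hy : 0 < y) {ξ₂ : ℝ} (hξ : |ξ₂| ≤ 1) :
    Summable fun n : ℤ => ‖h (((n : ℝ) - ξ₂) * Real.sqrt y)‖ := by
  obtain ⟨C, hC0, hC⟩ := schwartz_bound h
  refine Summable.of_nonneg_of_le (fun n => norm_nonneg _) (fun n => ?_)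
    (((summable_base hy).mul_left C).congr fun n => (mul_one_div _ _))
  have := norm_le_aux h hC0 hC hy n (t := -ξ₂) (by rwa [abs_neg])
  simpa [sub_eq_add_neg] using this

instance fact_zero_lt_one_real : Fact ((0:ℝ) < 1) := ⟨one_pos⟩

open AddCircle

lemma parseval_aux (c : ℤ → ℂ) (hc : Summable fun n => ‖c n‖) :
    ∫ ξ₁ in (0:ℝ)..1, ‖∑' n : ℤ, c n * fourier n (ξ₁ : UnitAddCircle)‖ ^ 2
      = ∑' n : ℤ, ‖c n‖ ^ 2 := by
  have hsm : Summable (fun n : ℤ => c n • (fourier n : C(UnitAddCircle, ℂ))) := by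
    apply Summable.of_norm
    simpa only [norm_smul, fourier_norm, mul_one] using hc
  set g : C(UnitAddCircle, ℂ) := ∑' n : ℤ, c n • (fourier n : C(UnitAddCircle, ℂ)) with hg
  have hgapply : ∀ u : UnitAddCircle, g u = ∑' n : ℤ, c n * fourier n u := by
    intro u
    rw [hg, ← ContinuousMap.tsum_apply hsm u]
    simp only [ContinuousMap.smul_apply, smul_eq_mul]
  -- L² version
  have hL2 : HasSum (fun n : ℤ => c n • fourierLp 2 n)
      (ContinuousMap.toLp (E := ℂ) 2 haarAddCircle ℂ g) := by
    have := (ContinuousMap.toLp (E := ℂ) 2 haarAddCircle ℂ).hasSum hsm.hasSum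
    simpa only [_root_.map_smul] using this
  have hcoeff : ∀ k : ℤ, fourierCoeff (⇑(ContinuousMap.toLp (E := ℂ) 2 haarAddCircle ℂ g)) k
      = c k := by
    intro k
    rw [← fourierBasis_repr]
    have h1 : HasSum (fun n : ℤ => @inner ℂ _ _ (fourierLp 2 k) (c n • fourierLp 2 n))
        (@inner ℂ _ _ (fourierLp 2 k) (ContinuousMap.toLp (E := ℂ) 2 haarAddCircle ℂ g)) :=
      (innerSL ℂ (fourierLp (T := 1) 2 k)).hasSum hL2
    have h2 : (fun n : ℤ => @inner ℂ _ _ (fourierLp (T := 1) 2 k) (c n • fourierLp 2 n))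
        = fun n : ℤ => if n = k then c k else 0 := by
      funext n
      rw [inner_smul_right, orthonormal_iff_ite.mp orthonormal_fourier k n]
      by_cases hnk : n = k
      · simp [hnk]
      · simp [hnk, Ne.symm hnk]
    rw [h2] at h1
    rw [HilbertBasis.repr_apply_apply, coe_fourierBasis]
    exact h1.unique (hasSum_ite_eq k (c k))
  calc ∫ ξ₁ in (0:ℝ)..1, ‖∑' n : ℤ, c n * fourier n (ξ₁ : UnitAddCircle)‖ ^ 2
      = ∫ ξ₁ in (0:ℝ)..1, ‖g (ξ₁ : UnitAddCircle)‖ ^ 2 := by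
        simp_rw [hgapply]
    _ = ∫ u : UnitAddCircle, ‖g u‖ ^ 2 := by
        simpa using AddCircle.intervalIntegral_preimage 1 0 (fun u => ‖g u‖ ^ 2)
    _ = ∫ u : UnitAddCircle, ‖g u‖ ^ 2 ∂haarAddCircle := by
        rw [AddCircle.volume_eq_smul_haarAddCircle]
        simp
    _ = ∫ u : UnitAddCircle, ‖(ContinuousMap.toLp (E := ℂ) 2 haarAddCircle ℂ g) u‖ ^ 2
          ∂haarAddCircle := by
        apply integral_congr_ae
        filter_upwards [ContinuousMap.coeFn_toLp (p := 2) (𝕜 := ℂ) haarAddCircle g] with u hu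
        rw [hu]
    _ = ∑' n : ℤ, ‖fourierCoeff (⇑(ContinuousMap.toLp (E := ℂ) 2 haarAddCircle ℂ g)) n‖ ^ 2 :=
        (tsum_sq_fourierCoeff _).symm
    _ = ∑' n : ℤ, ‖c n‖ ^ 2 := by simp_rw [hcoeff]


/-- The Jacobi theta sum at `φ = 0` (so that `h_φ = h`):
`Θ_h(x+iy; ξ) = y^{1/4} ∑_{n∈ℤ} h((n-ξ₂)√y) e((1/2)(n-ξ₂)²x + nξ₁)`. -/
noncomputable def Theta (h : SchwartzMap ℝ ℂ) (x y ξ₁ ξ₂ : ℝ) : ℂ :=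
  (y ^ ((1 : ℝ) / 4) : ℝ) *
    ∑' n : ℤ, h (((n : ℝ) - ξ₂) * Real.sqrt y) *
      Complex.exp (2 * Real.pi * Complex.I *
        (((1 : ℝ) / 2) * ((n : ℝ) - ξ₂) ^ 2 * x + (n : ℝ) * ξ₁))

/-- The integral over the torus of the absolute square of the theta sum is the
squared `L²` norm of `h`. -/
theorem theta_L2_norm (h : SchwartzMap ℝ ℂ) (x y : ℝ) (hy : 0 < y) :
    ∫ ξ₂ in (0:ℝ)..1, (∫ ξ₁ in (0:ℝ)..1, ‖Theta h x y ξ₁ ξ₂‖ ^ 2)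
      = ∫ w : ℝ, ‖h w‖ ^ 2 := by
  obtain ⟨C, hC0, hC⟩ := schwartz_bound h
  have hsq : Real.sqrt y ^ 2 = y := Real.sq_sqrt hy.le
  have hy4 : (0:ℝ) ≤ y ^ ((1:ℝ)/4) := Real.rpow_nonneg hy.le _
  -- Step 1: Parseval in ξ₁
  have step1 : ∀ ξ₂ : ℝ, |ξ₂| ≤ 1 →
      (∫ ξ₁ in (0:ℝ)..1, ‖Theta h x y ξ₁ ξ₂‖ ^ 2)
        = Real.sqrt y * ∑' n : ℤ, ‖h (((n:ℝ) - ξ₂) * Real.sqrt y)‖ ^ 2 := by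
    intro ξ₂ hξ
    set c : ℤ → ℂ := fun n => ((y ^ ((1:ℝ)/4) : ℝ) : ℂ) * h (((n:ℝ) - ξ₂) * Real.sqrt y) *
      Complex.exp ((2 * Real.pi * (((1:ℝ)/2) * ((n:ℝ) - ξ₂) ^ 2 * x) : ℝ) * Complex.I) with hcdef
    have hnorm : ∀ n : ℤ, ‖c n‖ = y ^ ((1:ℝ)/4) * ‖h (((n:ℝ) - ξ₂) * Real.sqrt y)‖ := by
      intro n
      rw [hcdef]
      simp only [norm_mul, Complex.norm_exp_ofReal_mul_I, mul_one, Complex.norm_real,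
        Real.norm_eq_abs, abs_of_nonneg hy4]
    have hsummable : Summable fun n : ℤ => ‖c n‖ := by
      refine Summable.congr ?_ (fun n => (hnorm n).symm)
      exact (summable_norm_h h hy hξ).mul_left _
    have hTheta : ∀ ξ₁ : ℝ, Theta h x y ξ₁ ξ₂
        = ∑' n : ℤ, c n * fourier n (ξ₁ : UnitAddCircle) := by
      intro ξ₁
      rw [Theta, ← tsum_mul_left]
      apply tsum_congr
      intro n
      rw [hcdef]
      simp only
      rw [fourier_coe_apply]
      rw [show Complex.exp (2 * Real.pi * Complex.I *
            (((1 : ℝ) / 2) * ((n : ℝ) - ξ₂) ^ 2 * x + (n : ℝ) * ξ₁))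
          = Complex.exp ((2 * Real.pi * (((1:ℝ)/2) * ((n:ℝ) - ξ₂) ^ 2 * x) : ℝ) * Complex.I)
            * Complex.exp (2 * Real.pi * Complex.I * n * ξ₁ / ((1:ℝ) : ℂ)) from by
        rw [← Complex.exp_add]; congr 1; push_cast; ring]
      ring
    calc (∫ ξ₁ in (0:ℝ)..1, ‖Theta h x y ξ₁ ξ₂‖ ^ 2)
        = ∫ ξ₁ in (0:ℝ)..1, ‖∑' n : ℤ, c n * fourier n (ξ₁ : UnitAddCircle)‖ ^ 2 := by
          simp_rw [hTheta]
      _ = ∑' n : ℤ, ‖c n‖ ^ 2 := parseval_aux c hsummable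
      _ = Real.sqrt y * ∑' n : ℤ, ‖h (((n:ℝ) - ξ₂) * Real.sqrt y)‖ ^ 2 := by
          rw [← tsum_mul_left]
          apply tsum_congr
          intro n
          rw [hnorm n, mul_pow, ← Real.rpow_natCast (y ^ ((1:ℝ)/4)) 2, ← Real.rpow_mul hy.le,
            Real.sqrt_eq_rpow]
          norm_num
  -- Continuous function G
  set G : C(ℝ, ℝ) := ⟨fun t => Real.sqrt y * ‖h ((-t) * Real.sqrt y)‖ ^ 2, by
    apply Continuous.mul continuous_const
    exact ((h.continuous.comp (by continuity)).norm.pow 2)⟩ with hGdef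
  have hGval : ∀ t : ℝ, G t = Real.sqrt y * ‖h ((-t) * Real.sqrt y)‖ ^ 2 := fun t => rfl
  -- rewrite tsum as sum of translates of G
  have hGrw : ∀ ξ₂ : ℝ, Real.sqrt y * ∑' n : ℤ, ‖h (((n:ℝ) - ξ₂) * Real.sqrt y)‖ ^ 2
      = ∑' n : ℤ, G (ξ₂ + (n:ℤ)) := by
    intro ξ₂
    rw [← tsum_mul_left, ← (Equiv.neg ℤ).tsum_eq (fun n : ℤ => G (ξ₂ + (n:ℤ)))]
    apply tsum_congr
    intro n
    simp only [Equiv.neg_apply]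
    rw [hGval, show ((n:ℝ) - ξ₂) * Real.sqrt y = -(ξ₂ + ((-n : ℤ) : ℝ)) * Real.sqrt y by
      push_cast; ring]
  -- bound for the sup-norms
  have hbound : ∀ (n : ℤ) (t : ℝ), |t| ≤ 1 →
      ‖G (t + (n:ℤ))‖ ≤ Real.sqrt y * C * (C / (1 + y * max (|((-n : ℤ) : ℝ)| - 1) 0 ^ 2)) := by
    intro n t ht
    rw [hGval, Real.norm_eq_abs, abs_of_nonneg (by positivity)]
    have key : ‖h ((-(t + (n:ℤ))) * Real.sqrt y)‖
        ≤ C / (1 + y * max (|((-n : ℤ) : ℝ)| - 1) 0 ^ 2) := by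
      have := norm_le_aux h hC0 hC hy (-n) (t := -t) (by rwa [abs_neg])
      convert this using 3
      push_cast
      ring
    have hCb : ‖h ((-(t + (n:ℤ))) * Real.sqrt y)‖ ≤ C := by
      refine (hC _).trans ?_
      exact div_le_self hC0 (by nlinarith [sq_nonneg ((-(t + (n:ℤ))) * Real.sqrt y)])
    have h0 : (0:ℝ) ≤ ‖h ((-(t + (n:ℤ))) * Real.sqrt y)‖ := norm_nonneg _
    rw [mul_assoc]
    apply mul_le_mul_of_nonneg_left _ (Real.sqrt_nonneg y)
    calc ‖h ((-(t + (n:ℤ))) * Real.sqrt y)‖ ^ 2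
        = ‖h ((-(t + (n:ℤ))) * Real.sqrt y)‖ * ‖h ((-(t + (n:ℤ))) * Real.sqrt y)‖ := sq _
      _ ≤ C * (C / (1 + y * max (|((-n : ℤ) : ℝ)| - 1) 0 ^ 2)) :=
          mul_le_mul hCb key h0 hC0
  -- summability of sup norms over translates
  have hsum_norm : Summable fun n : ℤ =>
      ‖(G.comp (ContinuousMap.addRight (n:ℤ))).restrict
        (⟨Set.uIcc 0 1, isCompact_uIcc⟩ : TopologicalSpace.Compacts ℝ)‖ := by
    have hmaj : Summable (fun n : ℤ => Real.sqrt y * C *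
        (C / (1 + y * max (|((-n : ℤ) : ℝ)| - 1) 0 ^ 2))) := by
      have : Summable (fun n : ℤ => C / (1 + y * max (|(n : ℝ)| - 1) 0 ^ 2)) :=
        ((summable_base hy).mul_left C).congr fun n => (mul_one_div _ _)
      exact ((this.comp_injective neg_injective).mul_left (Real.sqrt y * C)).congr fun n => by
        simp only [Function.comp_apply]
    refine Summable.of_nonneg_of_le (fun n => norm_nonneg _) (fun n => ?_) hmaj
    apply ContinuousMap.norm_le _ (by positivity) |>.mpr
    rintro ⟨t, ht⟩
    simp only [ContinuousMap.restrict_apply, ContinuousMap.comp_apply,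
      ContinuousMap.coe_addRight]
    apply hbound n t
    have ht' : t ∈ Set.uIcc (0:ℝ) 1 := ht
    rw [Set.uIcc_of_le (by norm_num : (0:ℝ) ≤ 1)] at ht'
    rw [abs_le]; exact ⟨by linarith [ht'.1], ht'.2⟩
  -- Integrability of G
  have hInt2 : Integrable (fun w : ℝ => ‖h w‖ ^ 2) := by
    refine Integrable.mono' (h.integrable.norm.const_mul C) ?_ ?_
    · exact (h.continuous.norm.pow 2).aestronglyMeasurable
    · filter_upwards with w
      rw [Real.norm_eq_abs, abs_of_nonneg (by positivity), sq]
      apply mul_le_mul_of_nonneg_right _ (norm_nonneg _)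
      exact (hC w).trans (div_le_self hC0 (by nlinarith [sq_nonneg w]))
  have hGint : Integrable (⇑G) := by
    have h1 : Integrable (fun t : ℝ => ‖h (t * Real.sqrt y)‖ ^ 2) :=
      hInt2.comp_mul_right' (by positivity)
    have h2 : Integrable (fun t : ℝ => ‖h ((-t) * Real.sqrt y)‖ ^ 2) := by
      have := h1.comp_neg
      simpa using this
    simpa [hGdef] using h2.const_mul (Real.sqrt y)
  -- value of ∫ G
  have hGval2 : ∫ t : ℝ, G t = ∫ w : ℝ, ‖h w‖ ^ 2 := by
    calc ∫ t : ℝ, G t = Real.sqrt y * ∫ t : ℝ, ‖h ((-t) * Real.sqrt y)‖ ^ 2 := by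
          simp_rw [hGval]; rw [integral_const_mul]
      _ = Real.sqrt y * ∫ t : ℝ, ‖h (t * Real.sqrt y)‖ ^ 2 := by
          congr 1
          have := integral_neg_eq_self (fun t : ℝ => ‖h (t * Real.sqrt y)‖ ^ 2) volume
          simpa using this
      _ = ∫ w : ℝ, ‖h w‖ ^ 2 := by
          rw [Measure.integral_comp_mul_right (fun w : ℝ => ‖h w‖ ^ 2) (Real.sqrt y)]
          rw [abs_of_nonneg (by positivity), smul_eq_mul, ← mul_assoc,
            mul_inv_cancel₀ (by positivity), one_mul]
  -- Put everything together
  calc ∫ ξ₂ in (0:ℝ)..1, (∫ ξ₁ in (0:ℝ)..1, ‖Theta h x y ξ₁ ξ₂‖ ^ 2)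
      = ∫ ξ₂ in (0:ℝ)..1, ∑' n : ℤ, (G.comp (ContinuousMap.addRight (n:ℤ))) ξ₂ := by
        apply intervalIntegral.integral_congr
        intro ξ₂ hξ
        rw [Set.uIcc_of_le (by norm_num : (0:ℝ) ≤ 1)] at hξ
        have habs : |ξ₂| ≤ 1 := by rw [abs_le]; exact ⟨by linarith [hξ.1], hξ.2⟩
        show (∫ ξ₁ in (0:ℝ)..1, ‖Theta h x y ξ₁ ξ₂‖ ^ 2)
          = ∑' n : ℤ, (G.comp (ContinuousMap.addRight ((n : ℤ) : ℝ))) ξ₂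
        rw [step1 ξ₂ habs, hGrw ξ₂]
        apply tsum_congr
        intro n
        simp [ContinuousMap.comp_apply, ContinuousMap.coe_addRight]
    _ = ∑' n : ℤ, ∫ ξ₂ in (0:ℝ)..1, (G.comp (ContinuousMap.addRight (n:ℤ))) ξ₂ :=
        (intervalIntegral.tsum_intervalIntegral_eq_of_summable_norm hsum_norm).symm
    _ = ∫ t : ℝ, G t := by
        have := hGint.hasSum_intervalIntegral_comp_add_int.tsum_eq
        rw [← this]
        apply tsum_congr
        intro n
        apply intervalIntegral.integral_congr
        intro ξ₂ _
        show (G.comp (ContinuousMap.addRight ((n : ℤ) : ℝ))) ξ₂ = G (ξ₂ + (n : ℤ))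
        simp [ContinuousMap.comp_apply, ContinuousMap.coe_addRight]
    _ = ∫ w : ℝ, ‖h w‖ ^ 2 := hGval2
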